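/- For all real B ≥ 0 and vectors r, s ∈ ℝ³ with B pointing in the e₃ direction (i.e. 𝐁 = B·e₃), |exp(i(1/4)𝐁·(r∧s)) − 1| ≤ (B/4)·|r|^{1/2}·|r−s|·|s|^{1/2}. -/

import Mathlib

open scoped RealInnerProductSpace

/-- The cross product on `EuclideanSpace ℝ (Fin 3)`. -/
noncomputable def cross3 (r s : EuclideanSpace ℝ (Fin 3)) : EuclideanSpace ℝ (Fin 3) :=
  (WithLp.equiv 2 (Fin 3 → ℝ)).symm
    ![r 1 * s 2 - r 2 * s 1, r 2 * s 0 - r 0 * s 2, r 0 * s 1 - r 1 * s 0]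

lemma exp_I_sub_one_le (t : ℝ) : ‖Complex.exp (Complex.I * t) - 1‖ ≤ |t| := by
  rw [mul_comm, Complex.exp_mul_I]
  have h : (Complex.cos t + Complex.sin t * Complex.I - 1) =
      Complex.ofReal (Real.cos t - 1) + Complex.ofReal (Real.sin t) * Complex.I := by
    push_cast [Complex.ofReal_cos, Complex.ofReal_sin]
    ring
  rw [h]
  rw [Complex.norm_def, Complex.normSq_apply]
  simp only [Complex.add_re, Complex.ofReal_re, Complex.mul_re, Complex.I_re, Complex.I_im,
    Complex.ofReal_im, Complex.add_im, Complex.mul_im]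
  have hcos := Real.one_sub_sq_div_two_le_cos (x := t)
  rw [show |t| = Real.sqrt (t ^ 2) by rw [Real.sqrt_sq_eq_abs]]
  apply Real.sqrt_le_sqrt
  nlinarith [Real.sin_sq_add_cos_sq t]

lemma cross_comp_bound (r s : EuclideanSpace ℝ (Fin 3)) :
    |r 0 * s 1 - r 1 * s 0| ≤ Real.sqrt ‖r‖ * ‖r - s‖ * Real.sqrt ‖s‖ := by
  have hr2 : r 0 ^ 2 + r 1 ^ 2 ≤ ‖r‖ ^ 2 := by
    rw [EuclideanSpace.norm_eq, Real.sq_sqrt (by positivity)]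
    have := sq_nonneg (r 2)
    simp only [Fin.sum_univ_three, sq_abs, Real.norm_eq_abs]
    nlinarith
  have hs2 : s 0 ^ 2 + s 1 ^ 2 ≤ ‖s‖ ^ 2 := by
    rw [EuclideanSpace.norm_eq, Real.sq_sqrt (by positivity)]
    have := sq_nonneg (s 2)
    simp only [Fin.sum_univ_three, sq_abs, Real.norm_eq_abs]
    nlinarith
  have hd2 : (r 0 - s 0) ^ 2 + (r 1 - s 1) ^ 2 ≤ ‖r - s‖ ^ 2 := by
    rw [EuclideanSpace.norm_eq, Real.sq_sqrt (by positivity)]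
    have h0 : (r - s) 0 = r 0 - s 0 := rfl
    have h1 : (r - s) 1 = r 1 - s 1 := rfl
    have h2 : (r - s) 2 = r 2 - s 2 := rfl
    have := sq_nonneg (r 2 - s 2)
    simp only [Fin.sum_univ_three, sq_abs, Real.norm_eq_abs, h0, h1, h2]
    nlinarith
  have h1 : |r 0 * s 1 - r 1 * s 0| ≤ ‖r‖ * ‖r - s‖ := by
    have cs : (r 0 * s 1 - r 1 * s 0) ^ 2
        ≤ (r 0 ^ 2 + r 1 ^ 2) * ((r 0 - s 0) ^ 2 + (r 1 - s 1) ^ 2) := by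
      nlinarith [sq_nonneg (r 0 * (r 0 - s 0) + r 1 * (r 1 - s 1))]
    have hm : (r 0 ^ 2 + r 1 ^ 2) * ((r 0 - s 0) ^ 2 + (r 1 - s 1) ^ 2) ≤ ‖r‖ ^ 2 * ‖r - s‖ ^ 2 :=
      mul_le_mul hr2 hd2 (by positivity) (by positivity)
    have key : (r 0 * s 1 - r 1 * s 0) ^ 2 ≤ (‖r‖ * ‖r - s‖) ^ 2 := by nlinarith
    calc |r 0 * s 1 - r 1 * s 0| = Real.sqrt ((r 0 * s 1 - r 1 * s 0) ^ 2) :=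
          (Real.sqrt_sq_eq_abs _).symm
      _ ≤ Real.sqrt ((‖r‖ * ‖r - s‖) ^ 2) := Real.sqrt_le_sqrt key
      _ = ‖r‖ * ‖r - s‖ := Real.sqrt_sq (by positivity)
  have h2 : |r 0 * s 1 - r 1 * s 0| ≤ ‖s‖ * ‖r - s‖ := by
    have cs : (r 0 * s 1 - r 1 * s 0) ^ 2
        ≤ (s 0 ^ 2 + s 1 ^ 2) * ((r 0 - s 0) ^ 2 + (r 1 - s 1) ^ 2) := by
      nlinarith [sq_nonneg (s 0 * (r 0 - s 0) + s 1 * (r 1 - s 1))]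
    have hm : (s 0 ^ 2 + s 1 ^ 2) * ((r 0 - s 0) ^ 2 + (r 1 - s 1) ^ 2) ≤ ‖s‖ ^ 2 * ‖r - s‖ ^ 2 :=
      mul_le_mul hs2 hd2 (by positivity) (by positivity)
    have key : (r 0 * s 1 - r 1 * s 0) ^ 2 ≤ (‖s‖ * ‖r - s‖) ^ 2 := by nlinarith
    calc |r 0 * s 1 - r 1 * s 0| = Real.sqrt ((r 0 * s 1 - r 1 * s 0) ^ 2) :=
          (Real.sqrt_sq_eq_abs _).symm
      _ ≤ Real.sqrt ((‖s‖ * ‖r - s‖) ^ 2) := Real.sqrt_le_sqrt key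
      _ = ‖s‖ * ‖r - s‖ := Real.sqrt_sq (by positivity)
  have habs : |r 0 * s 1 - r 1 * s 0|
      = Real.sqrt (|r 0 * s 1 - r 1 * s 0| * |r 0 * s 1 - r 1 * s 0|) :=
    (Real.sqrt_mul_self (abs_nonneg _)).symm
  rw [habs]
  have hle : Real.sqrt (|r 0 * s 1 - r 1 * s 0| * |r 0 * s 1 - r 1 * s 0|)
      ≤ Real.sqrt ((‖r‖ * ‖r - s‖) * (‖s‖ * ‖r - s‖)) :=
    Real.sqrt_le_sqrt (mul_le_mul h1 h2 (abs_nonneg _) (by positivity))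
  refine hle.trans (le_of_eq ?_)
  rw [Real.sqrt_mul (by positivity), Real.sqrt_mul (norm_nonneg r), Real.sqrt_mul (norm_nonneg s)]
  have hds : Real.sqrt ‖r - s‖ * Real.sqrt ‖r - s‖ = ‖r - s‖ := Real.mul_self_sqrt (norm_nonneg _)
  linear_combination (Real.sqrt ‖r‖ * Real.sqrt ‖s‖) * hds

theorem magnetic_phase_bound (B : ℝ) (hB : 0 ≤ B) (r s : EuclideanSpace ℝ (Fin 3)) :
    ‖(Complex.exp (Complex.I *
            ((1 / 4) * ⟪B • EuclideanSpace.single (2 : Fin 3) (1 : ℝ), cross3 r s⟫)) - 1)‖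
      ≤ (B / 4) * Real.sqrt ‖r‖ * ‖r - s‖ * Real.sqrt ‖s‖ := by
  have hinner : ⟪B • EuclideanSpace.single (2 : Fin 3) (1 : ℝ), cross3 r s⟫ =
      B * (r 0 * s 1 - r 1 * s 0) := by
    rw [real_inner_smul_left, EuclideanSpace.inner_single_left]
    simp [cross3]
  have ht : (Complex.I * ((1 / 4) * ⟪B • EuclideanSpace.single (2 : Fin 3) (1 : ℝ), cross3 r s⟫))
      = Complex.I * (((1 / 4 : ℝ) * (B * (r 0 * s 1 - r 1 * s 0)) : ℝ) : ℂ) := by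
    rw [hinner]; push_cast; ring
  rw [ht]
  refine (exp_I_sub_one_le _).trans ?_
  rw [abs_mul, abs_mul]
  have h := cross_comp_bound r s
  have h14 : |(1 / 4 : ℝ)| = 1 / 4 := by norm_num
  have hBa : |B| = B := abs_of_nonneg hB
  rw [h14, hBa]
  calc 1 / 4 * (B * |r 0 * s 1 - r 1 * s 0|)
      ≤ 1 / 4 * (B * (Real.sqrt ‖r‖ * ‖r - s‖ * Real.sqrt ‖s‖)) := by
        gcongr
    _ = B / 4 * Real.sqrt ‖r‖ * ‖r - s‖ * Real.sqrt ‖s‖ := by ring
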